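/- For every finite abelian group K, D(Z_2 ⊕ Z_2 ⊕ Z_2 ⊕ K) ≤ 2·D(K) + 3. -/

import Mathlib

set_option maxRecDepth 10000
set_option linter.unusedSectionVars false

/-- The Davenport constant: the smallest `d` such that every multiset of `d`
elements of `G` contains a nonempty zero-sum sub-multiset. -/
noncomputable def davenport (G : Type*) [AddCommGroup G] : ℕ :=
  sInf {d | ∀ S : Multiset G, Multiset.card S = d →
    ∃ T, T ≤ S ∧ T ≠ 0 ∧ T.sum = 0}

namespace DavenportAux

abbrev V := ZMod 2 × ZMod 2 × ZMod 2

lemma vtwo : ∀ v : V, v + v = 0 := by decide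

lemma cardV : Fintype.card V = 8 := by decide

lemma L1 : ∀ s : Finset V, 4 ≤ s.card → ∃ F ∈ s.powerset, F ≠ ∅ ∧ F.sum id = 0 := by decide

lemma L2 : ∀ s : Finset V, s.card = 7 → (0:V) ∈ s ∨
    ∃ F ∈ s.powerset, F ≠ ∅ ∧ F ≠ s ∧ F.sum id = 0 ∧ (s \ F).sum id = 0 := by decide

lemma finsum_val {γ : Type*} [AddCommMonoid γ] (F : Finset γ) : F.val.sum = F.sum id := by
  rw [Finset.sum_eq_multiset_sum, Multiset.map_id]

section Lift
variable {α β : Type*} [DecidableEq α] [DecidableEq β]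

lemma msub_map (f : α → β) {A B : Multiset α} (h : B ≤ A) :
    (A - B).map f = A.map f - B.map f := by
  obtain ⟨C, rfl⟩ := Multiset.le_iff_exists_add.mp h
  simp

lemma erase_map (f : α → β) (A : Multiset α) (a : α) (ha : a ∈ A) :
    (A.erase a).map f = (A.map f).erase (f a) := by
  rw [← Multiset.sub_singleton, ← Multiset.sub_singleton,
    msub_map f (Multiset.singleton_le.mpr ha)]
  simp

lemma lift_le_map (f : α → β) :
    ∀ (B : Multiset β) (A : Multiset α), B ≤ A.map f → ∃ B' ≤ A, B'.map f = B := by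
  intro B
  induction B using Multiset.induction with
  | empty => exact fun A _ => ⟨0, zero_le, rfl⟩
  | cons b B ih =>
    intro A h
    have hb : b ∈ A.map f := Multiset.mem_of_le h (Multiset.mem_cons_self _ _)
    obtain ⟨a, ha, rfl⟩ := Multiset.mem_map.mp hb
    have h2 : B ≤ (A.erase a).map f := by
      rw [erase_map f A a ha]
      simpa using Multiset.erase_le_erase (f a) h
    obtain ⟨B', hB', rfl⟩ := ih (A.erase a) h2
    refine ⟨a ::ₘ B', ?_, by simp⟩
    calc a ::ₘ B' ≤ a ::ₘ A.erase a := Multiset.cons_le_cons a hB'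
    _ = A := Multiset.cons_erase ha

end Lift

lemma sum_le_sum_of_le' {G : Type*} [AddCommMonoid G] {s t : Multiset (Multiset G)} (h : s ≤ t) :
    s.sum ≤ t.sum := by
  obtain ⟨u, rfl⟩ := Multiset.le_iff_exists_add.mp h
  simp [le_add_right]

lemma join_map_sum {G X : Type*} [AddCommMonoid X] (f : G → X) (M : Multiset (Multiset G)) :
    ((M.sum).map f).sum = (M.map fun B => ((B.map f)).sum).sum := by
  induction M using Multiset.induction with
  | empty => simp
  | cons B M ih => simp [ih]

section Claim
variable {K : Type*} [AddCommGroup K]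

abbrev GK (K : Type*) := ZMod 2 × ZMod 2 × ZMod 2 × K

def p1 : GK K → V := fun g => (g.1, g.2.1, g.2.2.1)

def pK : GK K → K := fun g => g.2.2.2

lemma claim : ∀ (t : ℕ) (A : Multiset (GK K)), 2*t+3 ≤ Multiset.card A →
    ∃ L : List (Multiset (GK K)), L.length = t ∧ L.sum ≤ A ∧
      ∀ B ∈ L, B ≠ 0 ∧ (B.map p1).sum = 0 := by
  classical
  intro t
  induction t with
  | zero => exact fun A _ => ⟨[], rfl, by simp, by simp⟩
  | succ t ih =>
    intro A hA
    by_cases h0 : ∃ x ∈ A, p1 x = 0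
    · obtain ⟨x, hx, hpx⟩ := h0
      have hc : 2*t+3 ≤ Multiset.card (A.erase x) := by
        rw [Multiset.card_erase_of_mem hx, Nat.pred_eq_sub_one]; omega
      obtain ⟨L, hlen, hsum, hblk⟩ := ih (A.erase x) hc
      refine ⟨{x} :: L, by simp [hlen], ?_, ?_⟩
      · have : ({x} : Multiset (GK K)) + L.sum = x ::ₘ L.sum := by simp
        rw [List.sum_cons, this]
        calc x ::ₘ L.sum ≤ x ::ₘ A.erase x := Multiset.cons_le_cons x hsum
        _ = A := Multiset.cons_erase hx
      · intro B hB
        rw [List.mem_cons] at hB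
        rcases hB with rfl | hB
        · exact ⟨by simp, by simp [hpx]⟩
        · exact hblk B hB
    · by_cases h1 : ∃ v : V, 2 ≤ (A.map p1).count v
      · obtain ⟨v, hv⟩ := h1
        have hvmem : v ∈ A.map p1 := Multiset.count_pos.mp (by omega)
        obtain ⟨x, hx, hpx⟩ := Multiset.mem_map.mp hvmem
        have hvmem2 : v ∈ (A.erase x).map p1 := by
          rw [erase_map p1 A x hx, hpx]
          rw [← Multiset.count_pos, Multiset.count_erase_self]
          omega
        obtain ⟨y, hy, hpy⟩ := Multiset.mem_map.mp hvmem2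
        have hc : 2*t+3 ≤ Multiset.card ((A.erase x).erase y) := by
          rw [Multiset.card_erase_of_mem hy, Multiset.card_erase_of_mem hx,
            Nat.pred_eq_sub_one, Nat.pred_eq_sub_one]
          have h5 : 5 ≤ Multiset.card A := by omega
          omega
        obtain ⟨L, hlen, hsum, hblk⟩ := ih _ hc
        refine ⟨({x, y} : Multiset (GK K)) :: L, by simp [hlen], ?_, ?_⟩
        · rw [List.sum_cons]
          have : ({x, y} : Multiset (GK K)) + L.sum = x ::ₘ y ::ₘ L.sum := by
            simp [Multiset.insert_eq_cons]
          rw [this]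
          calc x ::ₘ y ::ₘ L.sum ≤ x ::ₘ y ::ₘ (A.erase x).erase y :=
                Multiset.cons_le_cons x (Multiset.cons_le_cons y hsum)
          _ = x ::ₘ A.erase x := by rw [Multiset.cons_erase hy]
          _ = A := Multiset.cons_erase hx
        · intro B hB
          rw [List.mem_cons] at hB
          rcases hB with rfl | hB
          · refine ⟨by simp, ?_⟩
            have : ({x, y} : Multiset (GK K)).map p1 = {v, v} := by
              simp [Multiset.insert_eq_cons, hpx, hpy]
            rw [this]
            simpa using vtwo v
          · exact hblk B hB
      · -- all p1-values distinct and nonzero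
        push_neg at h0 h1
        set M := A.map p1 with hM
        have hnodup : M.Nodup := Multiset.nodup_iff_count_le_one.mpr (fun v => by
          have := h1 v; omega)
        have h0M : (0:V) ∉ M := by
          intro hm
          obtain ⟨x, hx, hpx⟩ := Multiset.mem_map.mp hm
          exact h0 x hx hpx
        set s := M.toFinset with hs
        have hsval : s.val = M := by
          rw [hs, Multiset.toFinset_val, Multiset.dedup_eq_self.mpr hnodup]
        have hscard : s.card = Multiset.card A := by
          rw [Finset.card_def, hsval, hM, Multiset.card_map]
        have h0s : (0:V) ∉ s := by rw [← hsval] at h0M; exact h0M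
        have hs7 : s.card ≤ 7 := by
          have hsub : s ⊆ Finset.univ.erase 0 :=
            fun x hx => Finset.mem_erase.mpr ⟨by rintro rfl; exact h0s hx, Finset.mem_univ x⟩
          calc s.card ≤ (Finset.univ.erase (0:V)).card := Finset.card_le_card hsub
          _ = Fintype.card V - 1 := by
            rw [Finset.card_erase_of_mem (Finset.mem_univ _), Finset.card_univ]
          _ ≤ 7 := by rw [cardV]
        have hcard7 : Multiset.card A ≤ 7 := by omega
        have ht1 : t ≤ 1 := by omega
        interval_cases t
        · -- one block needed
          obtain ⟨F, hFs, hFne, hFsum⟩ := L1 s (by omega)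
          rw [Finset.mem_powerset] at hFs
          have hFval : F.val ≤ M := by rw [← hsval]; exact Finset.val_le_iff.mpr hFs
          obtain ⟨B, hBA, hBmap⟩ := lift_le_map p1 F.val A (by rw [← hM]; exact hFval)
          refine ⟨[B], rfl, by simpa using hBA, ?_⟩
          intro B' hB'
          rw [List.mem_singleton] at hB'
          subst hB'
          constructor
          · intro h0'
            apply hFne
            rw [h0'] at hBmap
            exact Finset.val_eq_zero.mp hBmap.symm
          · rw [hBmap, finsum_val]
            exact hFsum
        · -- two blocks needed
          have hA7 : Multiset.card A = 7 := by omega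
          rcases L2 s (by omega) with h | ⟨F, hFs, hFne, hFnes, hFsum, hFcsum⟩
          · exact absurd h h0s
          rw [Finset.mem_powerset] at hFs
          have hFval : F.val ≤ M := by rw [← hsval]; exact Finset.val_le_iff.mpr hFs
          obtain ⟨B1, hB1A, hB1map⟩ := lift_le_map p1 F.val A (by rw [← hM]; exact hFval)
          set B2 := A - B1 with hB2
          have hB2map : B2.map p1 = (s \ F).val := by
            rw [hB2, msub_map p1 hB1A, hB1map, ← hM, ← hsval, Finset.sdiff_val]
          have hB1card : Multiset.card B1 = F.card := by
            rw [← Multiset.card_map p1 B1, hB1map]; rfl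
          have hB2card : 0 < Multiset.card B2 := by
            rw [hB2, Multiset.card_sub hB1A, hB1card]
            have : F.card < s.card :=
              Finset.card_lt_card (Finset.ssubset_iff_subset_ne.mpr ⟨hFs, hFnes⟩)
            omega
          refine ⟨[B1, B2], rfl, ?_, ?_⟩
          · have : B1 + B2 = A := add_tsub_cancel_of_le hB1A
            simp [this]
          · intro B' hB'
            rw [List.mem_cons, List.mem_singleton] at hB'
            rcases hB' with rfl | rfl
            · constructor
              · intro h0'
                apply hFne
                rw [h0'] at hB1map
                exact Finset.val_eq_zero.mp hB1map.symm
              · rw [hB1map, finsum_val]; exact hFsum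
            · constructor
              · intro h0'; rw [h0'] at hB2card; simp at hB2card
              · rw [hB2map, finsum_val]; exact hFcsum
end Claim

lemma card_mem (K : Type*) [AddCommGroup K] [Fintype K] :
    ∀ S : Multiset K, Multiset.card S = Fintype.card K →
      ∃ T, T ≤ S ∧ T ≠ 0 ∧ T.sum = 0 := by
  intro S hcard
  set n := Fintype.card K with hn
  set l := S.toList with hlst
  have hl : (↑l : Multiset K) = S := S.coe_toList
  have hlen : l.length = n := by rw [hlst, Multiset.length_toList, hcard]
  obtain ⟨i, j, hne, heq⟩ :=
    Fintype.exists_ne_map_eq_of_card_lt (fun i : Fin (n+1) => (l.take i).sum)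
      (by simp [hn])
  have key : ∀ i j : Fin (n+1), (i:ℕ) < j → (l.take i).sum = (l.take j).sum →
      ∃ T, T ≤ S ∧ T ≠ 0 ∧ T.sum = 0 := by
    intro i j hij hsum
    refine ⟨↑((l.drop i).take (j - i)), ?_, ?_, ?_⟩
    · rw [← hl]
      exact Multiset.coe_le.mpr
        (((List.take_sublist _ _).trans (List.drop_sublist _ _)).subperm)
    · have hjn : (j:ℕ) ≤ n := Nat.lt_succ_iff.mp j.isLt
      have : ((l.drop i).take ((j:ℕ) - i)).length = min ((j:ℕ)-i) (n - i) := by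
        simp [List.length_take, List.length_drop, hlen]
      intro h0
      rw [Multiset.coe_eq_zero, ← List.length_eq_zero_iff] at h0
      omega
    · have hsplit : l.take j = l.take i ++ (l.drop i).take ((j:ℕ) - i) := by
        conv_lhs => rw [show (j:ℕ) = (i:ℕ) + ((j:ℕ) - (i:ℕ)) by omega]
        exact List.take_add
      rw [Multiset.sum_coe]
      rw [hsplit, List.sum_append] at hsum
      refine add_left_cancel (a := (List.take (↑i) l).sum) ?_
      rw [add_zero]
      exact hsum.symm
  rcases lt_or_gt_of_ne (fun h : (i:ℕ) = (j:ℕ) => hne (Fin.ext h)) with h | h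
  · exact key i j h heq
  · exact key j i h heq.symm

end DavenportAux

open DavenportAux in
theorem davenport_z2cube_K (K : Type*) [AddCommGroup K] [Fintype K] :
    davenport (ZMod 2 × ZMod 2 × ZMod 2 × K) ≤ 2 * davenport K + 3 := by
  classical
  apply Nat.sInf_le
  simp only [Set.mem_setOf_eq]
  intro S hS
  set m := davenport K with hm
  have hmem : ∀ S' : Multiset K, Multiset.card S' = m →
      ∃ T, T ≤ S' ∧ T ≠ 0 ∧ T.sum = 0 :=
    Nat.sInf_mem (⟨Fintype.card K, card_mem K⟩ :
      Set.Nonempty {d | ∀ S : Multiset K, Multiset.card S = d →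
        ∃ T, T ≤ S ∧ T ≠ 0 ∧ T.sum = 0})
  obtain ⟨L, hlen, hsum, hblk⟩ := claim m S (le_of_eq hS.symm)
  set g : Multiset (GK K) → K := fun B => (B.map pK).sum with hg
  have hκcard : Multiset.card (↑(L.map g) : Multiset K) = m := by
    simp [hlen]
  obtain ⟨T, hTle, hTne, hTsum⟩ := hmem ↑(L.map g) hκcard
  have hTle' : T ≤ (↑L : Multiset (Multiset (GK K))).map g := by
    rwa [Multiset.map_coe]
  obtain ⟨L₀, hL₀, hL₀map⟩ := lift_le_map g T ↑L hTle'
  refine ⟨L₀.sum, ?_, ?_, ?_⟩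
  · calc L₀.sum ≤ (↑L : Multiset (Multiset (GK K))).sum := sum_le_sum_of_le' hL₀
    _ = L.sum := by rw [Multiset.sum_coe]
    _ ≤ S := hsum
  · -- nonempty
    have hL₀ne : L₀ ≠ 0 := by
      intro h; rw [h] at hL₀map; exact hTne (by simpa using hL₀map.symm)
    obtain ⟨B, hB⟩ := Multiset.exists_mem_of_ne_zero hL₀ne
    have hBL : B ∈ L := Multiset.mem_coe.mp (Multiset.mem_of_le hL₀ hB)
    have hBne : B ≠ 0 := (hblk B hBL).1
    obtain ⟨M', hM'⟩ := Multiset.exists_cons_of_mem hB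
    intro h0
    apply hBne
    have : B ≤ L₀.sum := by rw [hM', Multiset.sum_cons]; exact le_add_right (le_refl B)
    rw [h0] at this
    exact Multiset.le_zero.mp this
  · -- zero sum
    have hv : ((L₀.sum).map p1).sum = 0 := by
      rw [join_map_sum]
      apply Multiset.sum_eq_zero
      intro x hx
      obtain ⟨B, hB, rfl⟩ := Multiset.mem_map.mp hx
      exact (hblk B (Multiset.mem_coe.mp (Multiset.mem_of_le hL₀ hB))).2
    have hk : ((L₀.sum).map pK).sum = 0 := by
      rw [join_map_sum, hL₀map]
      exact hTsum
    set u := (L₀.sum : Multiset (GK K)).sum with hu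
    have h1 : p1 u = 0 := by
      let φ : GK K →+ V :=
        { toFun := p1, map_zero' := rfl, map_add' := fun _ _ => rfl }
      have h := map_multiset_sum φ L₀.sum
      have hco : (⇑φ : GK K → V) = p1 := rfl
      rw [hco] at h
      exact h.trans hv
    have h2 : pK u = 0 := by
      let ψ : GK K →+ K :=
        { toFun := pK, map_zero' := rfl, map_add' := fun _ _ => rfl }
      have h := map_multiset_sum ψ L₀.sum
      have hco : (⇑ψ : GK K → K) = pK := rfl
      rw [hco] at h
      exact h.trans hk
    simp only [p1, Prod.ext_iff, Prod.fst_zero, Prod.snd_zero] at h1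
    obtain ⟨ha, hb, hc⟩ := h1
    exact Prod.ext ha (Prod.ext hb (Prod.ext hc h2))
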